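/- arXiv:1105.1849 — 2 statements merged into one kernel-verified Lean document; each statement's English description precedes it below -/
import Mathlib

section
/- Let (A, m_A) be a complete Noetherian local ring and φ : A → A a local ring endomorphism. Then φ is finite (i.e., A is a finitely generated module over φ(A)) if and only if the ideal of A generated by φ(m_A) is m_A-primary and the residue field extension A/m_A over φ(A)/φ(m_A) is finite. -/
open IsLocalRing

section Aux

variable {A : Type*} [CommRing A]

/-- Elementwise generation predicate: there is a finite family `x` such that every
element of `V` is congruent modulo `W` to a `φ`-linear combination of the `x i`. -/
private def Gen (φ : A →+* A) (V W : Ideal A) : Prop :=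
  ∃ (n : ℕ) (x : Fin n → A), ∀ v ∈ V, ∃ c : Fin n → A, v - ∑ i, φ (c i) * x i ∈ W

private lemma gen_of_family (φ : A →+* A) {V W : Ideal A} {ι : Type*} [Fintype ι]
    (x : ι → A) (h : ∀ v ∈ V, ∃ c : ι → A, v - ∑ i, φ (c i) * x i ∈ W) : Gen φ V W := by
  classical
  refine ⟨Fintype.card ι, x ∘ (Fintype.equivFin ι).symm, fun v hv => ?_⟩
  obtain ⟨c, hc⟩ := h v hv
  refine ⟨c ∘ (Fintype.equivFin ι).symm, ?_⟩
  have he : ∑ j, φ ((c ∘ (Fintype.equivFin ι).symm) j) * (x ∘ (Fintype.equivFin ι).symm) j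
      = ∑ i, φ (c i) * x i := (Fintype.equivFin ι).symm.sum_comp (fun i => φ (c i) * x i)
  rwa [he]

private lemma Gen.trans {φ : A →+* A} {V W U : Ideal A} (h1 : Gen φ V W) (h2 : Gen φ W U) :
    Gen φ V U := by
  obtain ⟨n, x, hx⟩ := h1
  obtain ⟨p, y, hy⟩ := h2
  apply gen_of_family φ (ι := Fin n ⊕ Fin p) (Sum.elim x y)
  intro v hv
  obtain ⟨c, hc⟩ := hx v hv
  obtain ⟨d, hd⟩ := hy _ hc
  refine ⟨Sum.elim c d, ?_⟩
  rw [Fintype.sum_sum_type]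
  simp only [Sum.elim_inl, Sum.elim_inr]
  have heq : v - (∑ i, φ (c i) * x i + ∑ j, φ (d j) * y j)
      = (v - ∑ i, φ (c i) * x i) - ∑ j, φ (d j) * y j := by ring
  rw [heq]
  exact hd

private lemma gen_top_max [IsLocalRing A] (φ : A →+* A) [IsLocalHom φ]
    (h2 : (ResidueField.map φ).Finite) : Gen φ ⊤ (maximalIdeal A) := by
  classical
  letI : Algebra (ResidueField A) (ResidueField A) := (ResidueField.map φ).toAlgebra
  letI : Module (ResidueField A) (ResidueField A) := Algebra.toModule
  letI : SMul (ResidueField A) (ResidueField A) := Algebra.toSMul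
  have h2' : Module.Finite (ResidueField A) (ResidueField A) := h2
  obtain ⟨t, ht⟩ := Module.finite_def.mp h2'
  choose l hl using residue_surjective (R := A)
  apply gen_of_family φ (ι := ↥t) (fun y => l ↑y)
  rintro v -
  have hv : residue A v ∈ Submodule.span (ResidueField A) (↑t : Set (ResidueField A)) := by
    rw [ht]; exact Submodule.mem_top
  obtain ⟨f, -, hf⟩ := Submodule.mem_span_finset.mp hv
  refine ⟨fun y => l (f ↑y), ?_⟩
  have hres : residue A (v - ∑ y : ↥t, φ (l (f ↑y)) * l ↑y) = 0 := by
    rw [map_sub, map_sum]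
    have hterm : ∀ y : ↥t, residue A (φ (l (f ↑y)) * l ↑y) = f ↑y • (y : ResidueField A) := by
      intro y
      rw [map_mul, hl, Algebra.smul_def, RingHom.algebraMap_toAlgebra]
      congr 1
      rw [← hl (f ↑y), ResidueField.map_residue, hl]
    rw [Finset.sum_congr rfl (fun y _ => hterm y)]
    have hsum : ∑ y : ↥t, f ↑y • (y : ResidueField A) = ∑ z ∈ t, f z • z :=
      Finset.sum_coe_sort t (fun z => f z • z)
    rw [hsum, hf, sub_self]
  exact Ideal.Quotient.eq_zero_iff_mem.mp hres

private lemma gen_pow_succ [IsNoetherianRing A] [IsLocalRing A] (φ : A →+* A)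
    (hgen : Gen φ ⊤ (maximalIdeal A)) (k : ℕ) :
    Gen φ (maximalIdeal A ^ k) (maximalIdeal A ^ (k + 1)) := by
  classical
  obtain ⟨n, x, hx⟩ := hgen
  obtain ⟨g, hg⟩ := IsNoetherian.noetherian (maximalIdeal A ^ k)
  apply gen_of_family φ (ι := ↥g × Fin n) (fun p => x p.2 * (p.1 : A))
  intro v hv
  rw [← hg] at hv
  obtain ⟨f, -, hf⟩ := Submodule.mem_span_finset.mp hv
  choose c hc using fun z : A => hx (f z) Submodule.mem_top
  refine ⟨fun p => c (p.1 : A) p.2, ?_⟩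
  have hv' : v = ∑ z ∈ g.attach, f (z : A) * (z : A) := by
    rw [Finset.sum_attach g (fun z => f z * z), ← hf]
    exact Finset.sum_congr rfl fun z _ => (smul_eq_mul _ _).symm
  have heq : v - ∑ p : ↥g × Fin n, φ (c (p.1 : A) p.2) * (x p.2 * (p.1 : A)) =
      ∑ z ∈ g.attach, (f (z : A) - ∑ i, φ (c (z : A) i) * x i) * (z : A) := by
    rw [Fintype.sum_prod_type, hv']
    simp only [Finset.univ_eq_attach, sub_mul, Finset.sum_sub_distrib, Finset.sum_mul]
    congr 1
    exact Finset.sum_congr rfl fun z _ => Finset.sum_congr rfl fun i _ => by ring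
  rw [heq]
  refine Submodule.sum_mem _ fun z _ => ?_
  have h1 : f (z : A) - ∑ i, φ (c (z : A) i) * x i ∈ maximalIdeal A := hc (z : A)
  have h2 : (z : A) ∈ maximalIdeal A ^ k := hg ▸ Submodule.subset_span z.2
  rw [pow_succ']
  exact Ideal.mul_mem_mul h1 h2

private lemma gen_top_pow [IsNoetherianRing A] [IsLocalRing A] (φ : A →+* A)
    (hgen : Gen φ ⊤ (maximalIdeal A)) (k : ℕ) : Gen φ ⊤ (maximalIdeal A ^ k) := by
  induction k with
  | zero =>
    refine ⟨0, fun i => i.elim0, fun v _ => ⟨fun i => i.elim0, ?_⟩⟩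
    simp [Ideal.one_eq_top]
  | succ k ih => exact ih.trans (gen_pow_succ φ hgen k)

/-- The complete-Nakayama step: if a finite family generates `A` modulo the ideal
generated by `φ(m)`, then it generates `A` over `A` via `φ` on the nose. -/
private lemma span_of_gen [IsLocalRing A] [IsAdicComplete (maximalIdeal A) A]
    (φ : A →+* A) [IsLocalHom φ] {n : ℕ} {x : Fin n → A}
    (hx : ∀ b : A, ∃ c : Fin n → A, b - ∑ i, φ (c i) * x i ∈ Ideal.map φ (maximalIdeal A))
    (a : A) : ∃ c : Fin n → A, a = ∑ i, φ (c i) * x i := by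
  classical
  set m := maximalIdeal A with hm
  set I := Ideal.map φ m with hI
  have hIm : I ≤ m := by
    rw [hI, Ideal.map_le_iff_le_comap]
    intro μ hμ
    exact map_nonunit φ μ hμ
  have hpow : ∀ k : ℕ, I ^ k = Ideal.map φ (m ^ k) := fun k => (Ideal.map_pow φ m k).symm
  have key : ∀ (k : ℕ), ∀ a' ∈ I ^ k, ∃ c : Fin n → A,
      (∀ i, c i ∈ m ^ k) ∧ a' - ∑ i, φ (c i) * x i ∈ I ^ (k + 1) := by
    intro k a' ha'
    rw [hpow k] at ha'
    have ha'' : a' ∈ Ideal.span (φ '' ((m ^ k : Ideal A) : Set A)) := ha'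
    have main : ∀ y ∈ Ideal.span (φ '' ((m ^ k : Ideal A) : Set A)), ∀ b : A,
        ∃ c : Fin n → A, (∀ i, c i ∈ m ^ k) ∧ b * y - ∑ i, φ (c i) * x i ∈ I ^ (k + 1) := by
      intro y hy
      induction hy using Submodule.span_induction with
      | mem y hy =>
        obtain ⟨μ, hμ, rfl⟩ := hy
        intro b
        obtain ⟨d, hd⟩ := hx b
        refine ⟨fun i => μ * d i, fun i => Ideal.mul_mem_right _ _ hμ, ?_⟩
        have heq : b * φ μ - ∑ i, φ (μ * d i) * x i = φ μ * (b - ∑ i, φ (d i) * x i) := by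
          rw [mul_sub, Finset.mul_sum, mul_comm b (φ μ)]
          congr 1
          exact Finset.sum_congr rfl fun i _ => by rw [map_mul, mul_assoc]
        rw [heq, pow_succ]
        exact Ideal.mul_mem_mul ((hpow k).symm ▸ Ideal.mem_map_of_mem φ hμ) hd
      | zero =>
        intro b
        exact ⟨0, fun i => zero_mem _, by simp⟩
      | add y z hy' hz' ihy ihz =>
        intro b
        obtain ⟨c₁, hc₁, h₁⟩ := ihy b
        obtain ⟨c₂, hc₂, h₂⟩ := ihz b
        refine ⟨c₁ + c₂, fun i => add_mem (hc₁ i) (hc₂ i), ?_⟩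
        have heq : b * (y + z) - ∑ i, φ ((c₁ + c₂) i) * x i =
            (b * y - ∑ i, φ (c₁ i) * x i) + (b * z - ∑ i, φ (c₂ i) * x i) := by
          simp only [Pi.add_apply, map_add, add_mul, Finset.sum_add_distrib]
          ring
        rw [heq]
        exact add_mem h₁ h₂
      | smul r y hy' ihy =>
        intro b
        obtain ⟨c, hc, h⟩ := ihy (b * r)
        exact ⟨c, hc, by rwa [smul_eq_mul, ← mul_assoc]⟩
    obtain ⟨c, hc, h⟩ := main a' ha'' 1
    exact ⟨c, hc, by rwa [one_mul] at h⟩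
  -- build the successive approximations
  let rem : ∀ k : ℕ, {b : A // b ∈ I ^ k} := fun k =>
    Nat.rec ⟨a, by simp [Ideal.one_eq_top]⟩
      (fun k p => ⟨p.1 - ∑ i, φ ((key k p.1 p.2).choose i) * x i,
        (key k p.1 p.2).choose_spec.2⟩) k
  let coef : ℕ → Fin n → A := fun k => (key k (rem k).1 (rem k).2).choose
  have hcoefmem : ∀ k i, coef k i ∈ m ^ k := fun k => (key k (rem k).1 (rem k).2).choose_spec.1
  have hrem : ∀ k, (rem (k + 1)).1 = (rem k).1 - ∑ i, φ (coef k i) * x i := fun k => rfl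
  let S : ℕ → Fin n → A := fun k i => ∑ j ∈ Finset.range k, coef j i
  have hSrem : ∀ k, (rem k).1 = a - ∑ i, φ (S k i) * x i := by
    intro k
    induction k with
    | zero =>
      have h0 : (rem 0).1 = a := rfl
      rw [h0]
      simp [S]
    | succ k ih =>
      rw [hrem k, ih]
      have hstep : ∀ i, S (k + 1) i = S k i + coef k i := fun i => Finset.sum_range_succ _ _
      simp only [hstep, map_add, add_mul, Finset.sum_add_distrib]
      ring
  have hprec : ∀ i : Fin n, ∃ L : A, ∀ k, S k i ≡ L [SMOD (m ^ k • ⊤ : Submodule A A)] := by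
    intro i
    refine IsPrecomplete.prec (IsAdicComplete.toIsPrecomplete (I := m)) ?_
    intro p q hpq
    rw [SModEq.sub_mem, Ideal.smul_eq_mul, Ideal.mul_top]
    have hd : S p i - S q i = -∑ j ∈ Finset.Ico p q, coef j i := by
      have := Finset.sum_Ico_eq_sub (fun j => coef j i) hpq
      simp only [S]
      rw [this]
      ring
    rw [hd]
    exact neg_mem (Submodule.sum_mem _ fun j hj =>
      Ideal.pow_le_pow_right (Finset.mem_Ico.mp hj).1 (hcoefmem j i))
  choose L hL using hprec
  refine ⟨L, ?_⟩
  have hdiff : ∀ k : ℕ, a - ∑ i, φ (L i) * x i ∈ m ^ k := by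
    intro k
    have heq : a - ∑ i, φ (L i) * x i = (rem k).1 + ∑ i, φ (S k i - L i) * x i := by
      rw [hSrem k]
      simp only [map_sub, sub_mul, Finset.sum_sub_distrib]
      ring
    rw [heq]
    refine add_mem (Ideal.pow_right_mono hIm k (rem k).2) (Submodule.sum_mem _ fun i _ => ?_)
    have h1 : S k i - L i ∈ m ^ k := by
      have h := hL i k
      rwa [SModEq.sub_mem, Ideal.smul_eq_mul, Ideal.mul_top] at h
    have h2 : φ (S k i - L i) ∈ m ^ k := by
      have h3 := Ideal.mem_map_of_mem φ h1
      rw [← hpow k] at h3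
      exact Ideal.pow_right_mono hIm k h3
    exact Ideal.mul_mem_right _ _ h2
  have hzero : a - ∑ i, φ (L i) * x i = 0 := by
    refine IsHausdorff.haus (IsAdicComplete.toIsHausdorff (I := m)) _ fun k => ?_
    rw [SModEq.zero, Ideal.smul_eq_mul, Ideal.mul_top]
    exact hdiff k
  exact sub_eq_zero.mp hzero

end Aux

/-- Cohen's criterion: a local endomorphism `φ` of a complete Noetherian local ring
`(A, m_A)` is finite iff the ideal generated by `φ(m_A)` is `m_A`-primary and the
induced residue field extension is finite. -/
theorem finite_selfmap_iff_primary_and_residue_finite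
    (A : Type*) [CommRing A] [IsNoetherianRing A] [IsLocalRing A]
    [IsAdicComplete (maximalIdeal A) A]
    (φ : A →+* A) [IsLocalHom φ] :
    φ.Finite ↔
      (Ideal.map φ (maximalIdeal A)).radical = maximalIdeal A ∧
      (ResidueField.map φ).Finite := by
  constructor
  · intro h
    have hIm : Ideal.map φ (maximalIdeal A) ≤ maximalIdeal A := by
      rw [Ideal.map_le_iff_le_comap]
      intro μ hμ
      exact map_nonunit φ μ hμ
    constructor
    · apply le_antisymm
      · calc (Ideal.map φ (maximalIdeal A)).radical
            ≤ (maximalIdeal A).radical := Ideal.radical_mono hIm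
          _ = maximalIdeal A := ((maximalIdeal.isMaximal A).isPrime).radical
      · rw [Ideal.radical_eq_sInf]
        refine le_sInf ?_
        rintro p ⟨hIp, hp⟩
        have hmc : maximalIdeal A ≤ Ideal.comap φ p :=
          fun μ hμ => hIp (Ideal.mem_map_of_mem φ hμ)
        have hcm : Ideal.comap φ p = maximalIdeal A :=
          ((maximalIdeal.isMaximal A).eq_of_le (Ideal.comap_ne_top φ hp.ne_top) hmc).symm
        haveI := hp
        have hmax : p.IsMaximal :=
          Ideal.isMaximal_of_isIntegral_of_isMaximal_comap' φ h.to_isIntegral p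
            (hcm ▸ maximalIdeal.isMaximal A)
        rw [IsLocalRing.eq_maximalIdeal hmax]
    · refine RingHom.Finite.of_comp_finite (f := residue A) ?_
      rw [ResidueField.map_comp_residue]
      exact RingHom.Finite.comp (RingHom.Finite.of_surjective _ residue_surjective) h
  · rintro ⟨h1, h2⟩
    obtain ⟨k, hk⟩ := Ideal.exists_radical_pow_le_of_fg (Ideal.map φ (maximalIdeal A))
      (by rw [h1]; exact IsNoetherian.noetherian _)
    rw [h1] at hk
    obtain ⟨n, x, hx⟩ := gen_top_pow φ (gen_top_max φ h2) k
    have hx' : ∀ b : A, ∃ c : Fin n → A,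
        b - ∑ i, φ (c i) * x i ∈ Ideal.map φ (maximalIdeal A) :=
      fun b => (hx b Submodule.mem_top).imp fun c hc => hk hc
    have hall := span_of_gen φ hx'
    letI : Algebra A A := φ.toAlgebra
    letI : Module A A := Algebra.toModule
    have hfin : Module.Finite A A := by
      refine Module.finite_def.mpr (Submodule.fg_def.mpr ⟨Set.range x, Set.finite_range x, ?_⟩)
      rw [eq_top_iff]
      rintro a -
      rw [Submodule.mem_span_range_iff_exists_fun]
      obtain ⟨c, hc⟩ := hall a
      refine ⟨c, ?_⟩
      rw [hc]
      exact Finset.sum_congr rfl fun i _ => by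
        rw [Algebra.smul_def, RingHom.algebraMap_toAlgebra]
    exact hfin
end

section
/- Let (R, m) be a complete regular local ring containing a field, with minimal generators X_1, ..., X_n of m and coefficient field K. Given elements f_1, ..., f_n ∈ m such that the ideal (f_1,...,f_n) is m-primary, and a field embedding σ : K → R lifting a field homomorphism on residue fields, the unique continuous K-algebra-twisted endomorphism ψ of R = K[[X_1,...,X_n]] with ψ(X_i) = f_i and ψ|_K = σ is a finite ring map. -/
open IsLocalRing

section Aux

variable {A : Type*} [CommRing A] (I : Ideal A) {M : Type*} [AddCommGroup M] [Module A M]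

theorem aux_step {ι : Type*} [Fintype ι] (y : ι → M)
    (hspan : ∀ x : M, ∃ c : ι → A, x - ∑ i, c i • y i ∈ (I • ⊤ : Submodule A M))
    (n : ℕ) (z : M) (hz : z ∈ (I ^ n • ⊤ : Submodule A M)) :
    ∃ c : ι → A, (∀ i, c i ∈ I ^ n) ∧
      z - ∑ i, c i • y i ∈ (I ^ (n + 1) • ⊤ : Submodule A M) := by
  refine Submodule.smul_induction_on hz ?_ ?_
  · intro a ha m _
    obtain ⟨c, hc⟩ := hspan m
    refine ⟨fun i => a * c i, fun i => Ideal.mul_mem_right _ _ ha, ?_⟩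
    have h1 : a • m - ∑ i, (a * c i) • y i = a • (m - ∑ i, c i • y i) := by
      rw [smul_sub, Finset.smul_sum]
      simp [mul_smul]
    rw [h1]
    have h2 : a • (m - ∑ i, c i • y i) ∈ (I ^ n • (I • ⊤) : Submodule A M) :=
      Submodule.smul_mem_smul ha hc
    have h3 : (I ^ n • (I • ⊤) : Submodule A M) = (I ^ (n + 1) • ⊤ : Submodule A M) := by
      rw [← Submodule.smul_assoc, Ideal.smul_eq_mul, ← pow_succ]
    rwa [h3] at h2
  · rintro x₁ x₂ ⟨c₁, hc₁, h₁⟩ ⟨c₂, hc₂, h₂⟩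
    refine ⟨c₁ + c₂, fun i => Ideal.add_mem _ (hc₁ i) (hc₂ i), ?_⟩
    have h1 : x₁ + x₂ - ∑ i, (c₁ + c₂) i • y i
        = (x₁ - ∑ i, c₁ i • y i) + (x₂ - ∑ i, c₂ i • y i) := by
      simp only [Pi.add_apply, add_smul, Finset.sum_add_distrib]
      abel
    rw [h1]
    exact Submodule.add_mem _ h₁ h₂

theorem aux_complete [IsAdicComplete I A]
    (hsep : ∀ x : M, (∀ n : ℕ, x ∈ (I ^ n • ⊤ : Submodule A M)) → x = 0)
    {ι : Type*} [Fintype ι] (y : ι → M)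
    (hspan : ∀ x : M, ∃ c : ι → A, x - ∑ i, c i • y i ∈ (I • ⊤ : Submodule A M))
    (x : M) : ∃ c : ι → A, x = ∑ i, c i • y i := by
  classical
  have step := aux_step I y hspan
  choose sc hsc1 hsc2 using step
  let zf : (n : ℕ) → {z : M // z ∈ (I ^ n • ⊤ : Submodule A M)} :=
    fun n => Nat.rec
      ⟨x, by rw [pow_zero, Ideal.one_eq_top, Submodule.top_smul]; exact Submodule.mem_top⟩
      (fun k p => ⟨p.1 - ∑ i, sc k p.1 p.2 i • y i, hsc2 k p.1 p.2⟩) n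
  let c : ℕ → ι → A := fun k => sc k (zf k).1 (zf k).2
  have hzf : ∀ k, (zf (k + 1)).1 = (zf k).1 - ∑ i, c k i • y i := fun k => rfl
  let b : ℕ → ι → A := fun k i => ∑ j ∈ Finset.range k, c j i
  have hb : ∀ k, x - ∑ i, b k i • y i = (zf k).1 := by
    intro k
    induction k with
    | zero => simp [b, zf]
    | succ k ih =>
      rw [hzf k, ← ih]
      have hbs : ∀ i, b (k + 1) i = b k i + c k i := fun i => Finset.sum_range_succ _ _
      simp only [hbs, add_smul, Finset.sum_add_distrib]
      abel
  have hsm : ∀ n : ℕ, (I ^ n • ⊤ : Submodule A A) = (I ^ n : Ideal A) := by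
    intro n; rw [Ideal.smul_eq_mul, Ideal.mul_top]
  have hcau : ∀ i : ι, ∀ {m n : ℕ}, m ≤ n →
      b m i ≡ b n i [SMOD (I ^ m • ⊤ : Submodule A A)] := by
    intro i m n hmn
    rw [SModEq.sub_mem, hsm]
    have h1 : b m i - b n i = -∑ j ∈ Finset.Ico m n, c j i := by
      rw [Finset.sum_Ico_eq_sub _ hmn]
      simp [b]
    rw [h1]
    refine neg_mem (Submodule.sum_mem _ fun j hj => ?_)
    exact Ideal.pow_le_pow_right (Finset.mem_Ico.mp hj).1 (hsc1 j (zf j).1 (zf j).2 i)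
  have hlim := fun i => (inferInstance : IsPrecomplete I A).prec (hcau i)
  choose L hL using hlim
  refine ⟨L, ?_⟩
  have key : ∀ n : ℕ, x - ∑ i, L i • y i ∈ (I ^ n • ⊤ : Submodule A M) := by
    intro n
    have h1 : x - ∑ i, b n i • y i ∈ (I ^ n • ⊤ : Submodule A M) := by
      rw [hb n]; exact (zf n).2
    have h2 : ∀ i, L i - b n i ∈ (I ^ n : Ideal A) := by
      intro i
      have := hL i n
      rw [SModEq.sub_mem, hsm] at this
      simpa using neg_mem this
    have h3 : x - ∑ i, L i • y i
        = (x - ∑ i, b n i • y i) - ∑ i, (L i - b n i) • y i := by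
      simp only [sub_smul, Finset.sum_sub_distrib]
      abel
    rw [h3]
    exact Submodule.sub_mem _ h1 (Submodule.sum_mem _ fun i _ =>
      Submodule.smul_mem_smul (h2 i) Submodule.mem_top)
  exact sub_eq_zero.mp (hsep _ key)

theorem aux_ringHom_finite {A B : Type*} [CommRing A] [CommRing B] (φ : A →+* B)
    (I : Ideal A) [IsAdicComplete I A]
    (hsep : ∀ x : B, (∀ n : ℕ, x ∈ (I.map φ) ^ n) → x = 0)
    {ι : Type*} [Fintype ι] (y : ι → B)
    (hspan : ∀ x : B, ∃ c : ι → A, x - ∑ i, φ (c i) * y i ∈ I.map φ) :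
    φ.Finite := by
  letI : Algebra A B := φ.toAlgebra
  have halg : algebraMap A B = φ := rfl
  have hsm : ∀ n : ℕ, (I ^ n • ⊤ : Submodule A B)
      = ((I.map φ) ^ n).restrictScalars A := by
    intro n; rw [Ideal.smul_top_eq_map, halg, Ideal.map_pow]
  have hsmul : ∀ (a : A) (x : B), a • x = φ a * x := by
    intro a x; rw [Algebra.smul_def, halg]
  have hspan' : ∀ x : B, ∃ c : ι → A, x - ∑ i, c i • y i ∈ (I • ⊤ : Submodule A B) := by
    intro x
    obtain ⟨c, hc⟩ := hspan x
    refine ⟨c, ?_⟩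
    have h1 : (I • ⊤ : Submodule A B) = (I ^ 1 • ⊤ : Submodule A B) := by rw [pow_one]
    rw [h1, hsm, pow_one]
    simpa [hsmul] using hc
  have hsep' : ∀ x : B, (∀ n : ℕ, x ∈ (I ^ n • ⊤ : Submodule A B)) → x = 0 := by
    intro x hx
    refine hsep x fun n => ?_
    have := hx n
    rwa [hsm] at this
  have hall := aux_complete I hsep' y hspan'
  have hfg : (⊤ : Submodule A B).FG := by
    classical
    refine ⟨(Set.finite_range y).toFinset, ?_⟩
    rw [Set.Finite.coe_toFinset, eq_top_iff]
    intro x _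
    obtain ⟨c, hc⟩ := hall x
    rw [Submodule.mem_span_range_iff_exists_fun]
    exact ⟨c, hc.symm⟩
  show Module.Finite A B
  exact ⟨hfg⟩


theorem aux_residue {A B : Type*} [CommRing A] [CommRing B] (τ : A →+* B) (h : τ.Finite) :
    ∃ (s : ℕ) (e' : Fin s → B), ∀ v : B, ∃ d : Fin s → A, ∑ l, τ (d l) * e' l = v := by
  letI : Algebra A B := τ.toAlgebra
  have halg : algebraMap A B = τ := rfl
  have hfin : Module.Finite A B := h
  obtain ⟨s, e', he'⟩ := Module.Finite.exists_fin (R := A) (M := B)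
  refine ⟨s, e', fun v => ?_⟩
  have hv : v ∈ Submodule.span A (Set.range e') := by rw [he']; trivial
  rw [Submodule.mem_span_range_iff_exists_fun] at hv
  obtain ⟨d, hd⟩ := hv
  refine ⟨d, ?_⟩
  rw [← hd]
  exact Finset.sum_congr rfl fun l _ => by rw [Algebra.smul_def, halg]

end Aux

/-- Let `(R, m)` be a complete regular local ring containing a field, with minimal
generators `X₁,…,X_n` of `m` and coefficient field `K`.  Given `f₁,…,f_n ∈ m`
generating an `m`-primary ideal, and a field embedding `σ : K → R` lifting a field
homomorphism on residue fields inducing a finite residue extension, any (the unique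
continuous) endomorphism `ψ` of `R` with `ψ(Xᵢ) = fᵢ` and `ψ|_K = σ` is finite. -/
theorem endomorphism_with_primary_image_is_finite
    (R : Type*) [CommRing R] [IsNoetherianRing R] [IsLocalRing R]
    [IsAdicComplete (maximalIdeal R) R]
    (n : ℕ) (hn : ringKrullDim R = n)
    (X : Fin n → R) (hXm : ∀ i, X i ∈ maximalIdeal R)
    (hXgen : Ideal.span (Set.range X) = maximalIdeal R)
    (K : Subring R) (hKfield : IsField K)
    (hKcoeff : Function.Bijective fun x : K => residue R (x : R))
    (σ : K →+* R)
    (hσres : ((residue R).comp σ).Finite)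
    (f : Fin n → R) (hfm : ∀ i, f i ∈ maximalIdeal R)
    (hfprimary : (Ideal.span (Set.range f)).radical = maximalIdeal R)
    (ψ : R →+* R) (hψloc : IsLocalHom ψ)
    (hψX : ∀ i, ψ (X i) = f i)
    (hψK : ∀ x : K, ψ (x : R) = σ x) :
    ψ.Finite := by
  classical
  -- residue-field approximation with coefficients from `σ(K)`
  obtain ⟨s, e', he'⟩ := aux_residue ((residue R).comp σ) hσres
  choose elift helift using residue_surjective (R := R)
  set e : Fin s → R := fun l => elift (e' l) with he_def
  have happrox : ∀ a : R, ∃ d : Fin s → K,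
      a - ∑ l, σ (d l) * e l ∈ maximalIdeal R := by
    intro a
    obtain ⟨d, hd⟩ := he' (residue R a)
    refine ⟨d, ?_⟩
    have h0 : residue R (a - ∑ l, σ (d l) * e l) = 0 := by
      rw [map_sub, map_sum]
      have hterm : ∀ l, residue R (σ (d l) * e l)
          = ((residue R).comp σ) (d l) * e' l := by
        intro l
        rw [map_mul, he_def]
        simp [helift]
      rw [Finset.sum_congr rfl fun l _ => hterm l, hd, sub_self]
    exact Ideal.Quotient.eq_zero_iff_mem.mp h0
  -- generation of `R / m^k` with coefficients from `σ(K)`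
  have Q : ∀ k : ℕ, ∃ (ι : Type) (_ : Fintype ι) (y : ι → R),
      ∀ x : R, ∃ c : ι → K, x - ∑ i, σ (c i) * y i ∈ maximalIdeal R ^ k := by
    intro k
    induction k with
    | zero =>
      refine ⟨Fin 1, inferInstance, fun _ => 0, fun x => ⟨fun _ => 0, ?_⟩⟩
      rw [pow_zero, Ideal.one_eq_top]
      exact Submodule.mem_top
    | succ k ih =>
      obtain ⟨ι, hι, y, hy⟩ := ih
      obtain ⟨t, g, hg⟩ := Submodule.fg_iff_exists_fin_generating_family.mp
        (IsNoetherian.noetherian (maximalIdeal R ^ k))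
      refine ⟨ι ⊕ (Fin t × Fin s), inferInstance,
        Sum.elim y (fun p : Fin t × Fin s => e p.2 * g p.1), ?_⟩
      intro x
      obtain ⟨c, hc⟩ := hy x
      have hz : x - ∑ i, σ (c i) * y i ∈ Submodule.span R (Set.range g) := by
        rw [hg]; exact hc
      rw [Submodule.mem_span_range_iff_exists_fun] at hz
      obtain ⟨a, ha⟩ := hz
      choose d hd using fun j => happrox (a j)
      refine ⟨Sum.elim c (fun p : Fin t × Fin s => d p.1 p.2), ?_⟩
      have expand : x - ∑ i, σ (Sum.elim c (fun p : Fin t × Fin s => d p.1 p.2) i) *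
            Sum.elim y (fun p : Fin t × Fin s => e p.2 * g p.1) i
          = ∑ j, (a j - ∑ l, σ (d j l) * e l) * g j := by
        rw [Fintype.sum_sum_type]
        have ha' : x - ∑ i, σ (c i) * y i = ∑ j, a j * g j := by
          rw [← ha]; simp [smul_eq_mul]
        have hprod : (∑ p : Fin t × Fin s,
              σ (d p.1 p.2) * (e p.2 * g p.1))
            = ∑ j, ∑ l, σ (d j l) * e l * g j := by
          rw [Fintype.sum_prod_type]
          exact Finset.sum_congr rfl fun j _ => Finset.sum_congr rfl fun l _ => by ring
        simp only [Sum.elim_inl, Sum.elim_inr]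
        rw [← sub_sub, hprod, ha', ← Finset.sum_sub_distrib]
        exact Finset.sum_congr rfl fun j _ => by rw [sub_mul, Finset.sum_mul]
      rw [expand]
      refine Submodule.sum_mem _ fun j _ => ?_
      have h1 : a j - ∑ l, σ (d j l) * e l ∈ maximalIdeal R := hd j
      have h2 : g j ∈ maximalIdeal R ^ k := by
        rw [← hg]; exact Submodule.subset_span ⟨j, rfl⟩
      have h3 := Ideal.mul_mem_mul h1 h2
      rwa [← pow_succ'] at h3
  -- `m ^ k ≤ (f) ≤ ψ(m)R`
  obtain ⟨k, hk⟩ := Ideal.exists_radical_pow_le_of_fg (Ideal.span (Set.range f))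
    (by rw [hfprimary]; exact IsNoetherian.noetherian _)
  rw [hfprimary] at hk
  have hmap : Ideal.span (Set.range f) ≤ (maximalIdeal R).map ψ := by
    rw [Ideal.span_le]
    rintro _ ⟨i, rfl⟩
    rw [← hψX i]
    exact Ideal.mem_map_of_mem ψ (hXm i)
  have hmapm : (maximalIdeal R).map ψ ≤ maximalIdeal R := by
    rw [Ideal.map_le_iff_le_comap]
    intro a ha
    rw [Ideal.mem_comap, mem_maximalIdeal, mem_nonunits_iff]
    rw [mem_maximalIdeal, mem_nonunits_iff] at ha
    exact fun h => ha (hψloc.map_nonunit a h)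
  obtain ⟨ι, hι, y, hy⟩ := Q k
  refine aux_ringHom_finite ψ (maximalIdeal R) ?_ y ?_
  · intro x hx
    have hh : IsHausdorff (maximalIdeal R) R := inferInstance
    refine hh.haus x fun m => ?_
    rw [SModEq.zero]
    have e1 : (maximalIdeal R ^ m • ⊤ : Submodule R R) = maximalIdeal R ^ m := by
      rw [Ideal.smul_eq_mul, Ideal.mul_top]
    rw [e1]
    exact Ideal.pow_right_mono hmapm m (hx m)
  · intro x
    obtain ⟨c, hc⟩ := hy x
    refine ⟨fun i => ((c i : K) : R), ?_⟩
    have hco : ∀ i, ψ ((c i : K) : R) = σ (c i) := fun i => hψK (c i)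
    have hrw : x - ∑ i, ψ ((c i : K) : R) * y i = x - ∑ i, σ (c i) * y i := by
      congr 1
      exact Finset.sum_congr rfl fun i _ => by rw [hco i]
    rw [hrw]
    exact hmap (hk (Ideal.pow_le_pow_right (le_refl k) hc))
end
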